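/- arXiv:1906.05824 — 7 statements merged into one kernel-verified Lean document; each statement's English description precedes it below -/
import Mathlib

section
/- Let (U, 𝓑) be a measurable space in which all singletons are measurable, S ⊆ ℝ^r, and A, B : S × U → ℝ measurable in the second argument with B(α,u) < 0 for all (α,u) ∈ S × U. Suppose the test function C(α,u) = A(α,u)/B(α,u) attains its global maximum over S × U at a point (α*, u*). Then for every α ∈ S and every probability measure Ψ on (U, 𝓑) such that A(α,·) and B(α,·) are Ψ-integrable, one has I_α(Ψ) = (∫_U A(α,u) dΨ(u)) / (∫_U B(α,u) dΨ(u)) ≤ A(α*,u*)/B(α*,u*), and I_{α*}(δ_{u*}) = A(α*,u*)/B(α*,u*); hence the maximum of I_α(Ψ) is attained at (α*, δ_{u*}). -/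
open MeasureTheory

/-- Theorem 1 (max assertion, B strictly neg): if the test function
C(α,u) = A(α,u)/B(α,u) attains its global max over S × U at (αs, us), then the
linear-fractional integral functional I_α(Ψ) is bounded by C(αs,us) over all α ∈ S and
admissible probability measures Ψ, and the bound is attained at (αs, Measure.dirac us). -/
theorem stmt_5 {r : ℕ} {U : Type*} [MeasurableSpace U]
    (hsing : ∀ u : U, MeasurableSet ({u} : Set U))
    (S : Set (Fin r → ℝ)) (A B : (Fin r → ℝ) → U → ℝ)
    (hAmeas : ∀ α ∈ S, Measurable (A α)) (hBmeas : ∀ α ∈ S, Measurable (B α))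
    (hB : ∀ α ∈ S, ∀ u : U, B α u < 0)
    (αs : Fin r → ℝ) (us : U) (hαs : αs ∈ S)
    (hext : ∀ α ∈ S, ∀ u : U, A α u / B α u ≤ A αs us / B αs us) :
    (∀ α ∈ S, ∀ Ψ : Measure U, IsProbabilityMeasure Ψ →
        Integrable (A α) Ψ → Integrable (B α) Ψ →
        (∫ u, A α u ∂Ψ) / (∫ u, B α u ∂Ψ) ≤ A αs us / B αs us) ∧
    (∫ u, A αs u ∂(Measure.dirac us)) / (∫ u, B αs u ∂(Measure.dirac us))
      = A αs us / B αs us := by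
  set M := A αs us / B αs us with hM
  constructor
  · intro α hα Ψ hΨ hAint hBint
    have hpt : ∀ u, M * B α u ≤ A α u := by
      intro u
      have hBu := hB α hα u
      have h := (div_le_iff_of_neg hBu).mp (hext α hα u)
      linarith
    have hintB : ∫ u, B α u ∂Ψ < 0 := by
      have hpos : 0 < ∫ u, -B α u ∂Ψ := by
        rw [integral_pos_iff_support_of_nonneg_ae]
        · have : Function.support (fun u => -B α u) = Set.univ := by
            ext u; simp only [Set.mem_univ, Function.mem_support, iff_true, neg_ne_zero]; exact ne_of_lt (hB α hα u)
          simp [this]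
        · exact Filter.Eventually.of_forall fun u => (neg_pos.mpr (hB α hα u)).le
        · exact hBint.neg
      rw [integral_neg] at hpos
      linarith
    have hineq : M * ∫ u, B α u ∂Ψ ≤ ∫ u, A α u ∂Ψ := by
      calc M * ∫ u, B α u ∂Ψ = ∫ u, M * B α u ∂Ψ := (integral_const_mul M _).symm
        _ ≤ ∫ u, A α u ∂Ψ := integral_mono (hBint.const_mul M) hAint hpt
    exact (div_le_iff_of_neg hintB).mpr hineq
  · rw [integral_dirac' _ _ (hAmeas αs hαs).stronglyMeasurable,
        integral_dirac' _ _ (hBmeas αs hαs).stronglyMeasurable]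
end

section
/- Let (U, 𝓑) be a measurable space in which all singletons are measurable, S ⊆ ℝ^r, and A, B : S × U → ℝ measurable in the second argument with B(α,u) > 0 for all (α,u) ∈ S × U. Suppose the test function C(α,u) = A(α,u)/B(α,u) attains its global minimum over S × U at a point (α*, u*), i.e. A(α,u)/B(α,u) ≥ A(α*,u*)/B(α*,u*) for all (α,u) ∈ S × U. Then for every α ∈ S and every probability measure Ψ on (U, 𝓑) such that A(α,·) and B(α,·) are Ψ-integrable, one has I_α(Ψ) = (∫_U A(α,u) dΨ(u)) / (∫_U B(α,u) dΨ(u)) ≥ A(α*,u*)/B(α*,u*), and I_{α*}(δ_{u*}) = A(α*,u*)/B(α*,u*); hence the minimum of I_α(Ψ) over α ∈ S and admissible probability measures Ψ exists and is attained at the pair (α*, δ_{u*}). -/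
open MeasureTheory

/-- Theorem 1 (min assertion, B strictly pos): if the test function
C(α,u) = A(α,u)/B(α,u) attains its global min over S × U at (αs, us), then the
linear-fractional integral functional I_α(Ψ) is bounded by C(αs,us) over all α ∈ S and
admissible probability measures Ψ, and the bound is attained at (αs, Measure.dirac us). -/
theorem stmt_6 {r : ℕ} {U : Type*} [MeasurableSpace U]
    (hsing : ∀ u : U, MeasurableSet ({u} : Set U))
    (S : Set (Fin r → ℝ)) (A B : (Fin r → ℝ) → U → ℝ)
    (hAmeas : ∀ α ∈ S, Measurable (A α)) (hBmeas : ∀ α ∈ S, Measurable (B α))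
    (hB : ∀ α ∈ S, ∀ u : U, 0 < B α u)
    (αs : Fin r → ℝ) (us : U) (hαs : αs ∈ S)
    (hext : ∀ α ∈ S, ∀ u : U, A αs us / B αs us ≤ A α u / B α u) :
    (∀ α ∈ S, ∀ Ψ : Measure U, IsProbabilityMeasure Ψ →
        Integrable (A α) Ψ → Integrable (B α) Ψ →
        A αs us / B αs us ≤ (∫ u, A α u ∂Ψ) / (∫ u, B α u ∂Ψ)) ∧
    (∫ u, A αs u ∂(Measure.dirac us)) / (∫ u, B αs u ∂(Measure.dirac us))
      = A αs us / B αs us := by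
  have : MeasurableSingletonClass U := ⟨hsing⟩
  set c := A αs us / B αs us with hc
  constructor
  · intro α hα Ψ hΨ hAint hBint
    have hBpos : ∀ u, 0 < B α u := hB α hα
    have hIB : 0 < ∫ u, B α u ∂Ψ := by
      refine (integral_pos_iff_support_of_nonneg (fun u => (hBpos u).le) hBint).2 ?_
      have : (Function.support fun u => B α u) = Set.univ := by
        ext u; simp [Function.support, (hBpos u).ne']
      simp [this]
    rw [le_div_iff₀ hIB]
    have hpt : ∀ u, c * B α u ≤ A α u := by
      intro u
      exact (le_div_iff₀ (hBpos u)).1 (hext α hα u)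
    calc c * ∫ u, B α u ∂Ψ = ∫ u, c * B α u ∂Ψ := (integral_const_mul c _).symm
      _ ≤ ∫ u, A α u ∂Ψ := integral_mono (hBint.const_mul c) hAint hpt
  · rw [integral_dirac, integral_dirac]
end

section
/- Let (U, 𝓑) be a measurable space in which all singletons are measurable, S ⊆ ℝ^r, and A, B : S × U → ℝ measurable in the second argument with B(α,u) > 0 for all (α,u) ∈ S × U. Suppose the test function C(α,u) = A(α,u)/B(α,u) attains its global maximum over S × U at a point (α*, u*). Then the supremum of I_α(Ψ) over all α ∈ S and all probability measures Ψ on (U, 𝓑) for which A(α,·) and B(α,·) are Ψ-integrable equals the supremum of I_α(δ_u) over all α ∈ S and all points u ∈ U, and both equal the global maximum A(α*,u*)/B(α*,u*) of the test function: sup_{(α,Ψ)} I_α(Ψ) = sup_{(α,u) ∈ S × U} I_α(δ_u) = max_{(α,u) ∈ S × U} A(α,u)/B(α,u) = A(α*,u*)/B(α*,u*). -/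
open MeasureTheory

/-- Theorem 1, chain of equalities (maximum case, B strictly positive): if the test
function C(α,u) = A(α,u)/B(α,u) attains its global maximum over S × U at (αs, us), then
sup over (α,Ψ) of I_α(Ψ) = sup over (α,u) of I_α(δ_u) = max of the test function
= A(αs,us)/B(αs,us). -/
theorem stmt_7 {r : ℕ} {U : Type*} [MeasurableSpace U]
    (hsing : ∀ u : U, MeasurableSet ({u} : Set U))
    (S : Set (Fin r → ℝ)) (A B : (Fin r → ℝ) → U → ℝ)
    (hAmeas : ∀ α ∈ S, Measurable (A α)) (hBmeas : ∀ α ∈ S, Measurable (B α))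
    (hB : ∀ α ∈ S, ∀ u : U, 0 < B α u)
    (αs : Fin r → ℝ) (us : U) (hαs : αs ∈ S)
    (hmax : ∀ α ∈ S, ∀ u : U, A α u / B α u ≤ A αs us / B αs us) :
    sSup {x : ℝ | ∃ α ∈ S, ∃ Ψ : Measure U, IsProbabilityMeasure Ψ ∧
        Integrable (A α) Ψ ∧ Integrable (B α) Ψ ∧
        x = (∫ u, A α u ∂Ψ) / (∫ u, B α u ∂Ψ)}
      = A αs us / B αs us ∧
    sSup {x : ℝ | ∃ α ∈ S, ∃ u : U,
        x = (∫ v, A α v ∂(Measure.dirac u)) / (∫ v, B α v ∂(Measure.dirac u))}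
      = A αs us / B αs us ∧
    sSup {x : ℝ | ∃ α ∈ S, ∃ u : U, x = A α u / B α u} = A αs us / B αs us := by
  haveI : MeasurableSingletonClass U := ⟨hsing⟩
  set M : ℝ := A αs us / B αs us with hM
  -- pointwise bound A α u ≤ M * B α u
  have hpt : ∀ α ∈ S, ∀ u : U, A α u ≤ M * B α u := by
    intro α hα u
    have := hmax α hα u
    calc A α u = (A α u / B α u) * B α u := by
          rw [div_mul_cancel₀ _ (hB α hα u).ne']
      _ ≤ M * B α u := by
          exact mul_le_mul_of_nonneg_right this (hB α hα u).le
  -- bound for the measure case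
  have hbound : ∀ x ∈ {x : ℝ | ∃ α ∈ S, ∃ Ψ : Measure U, IsProbabilityMeasure Ψ ∧
        Integrable (A α) Ψ ∧ Integrable (B α) Ψ ∧
        x = (∫ u, A α u ∂Ψ) / (∫ u, B α u ∂Ψ)}, x ≤ M := by
    rintro x ⟨α, hα, Ψ, hΨ, hIA, hIB, rfl⟩
    have hBpos : 0 < ∫ u, B α u ∂Ψ := by
      have := (integral_pos_iff_support_of_nonneg
        (fun u => (hB α hα u).le) hIB).mpr ?_
      · exact this
      · have : Function.support (B α) = Set.univ := by
          ext u; simp [Function.support, (hB α hα u).ne']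
        rw [this]
        simp [hΨ.measure_univ]
    have hIA_le : ∫ u, A α u ∂Ψ ≤ M * ∫ u, B α u ∂Ψ := by
      calc ∫ u, A α u ∂Ψ ≤ ∫ u, M * B α u ∂Ψ :=
            integral_mono hIA (hIB.const_mul M) (fun u => hpt α hα u)
        _ = M * ∫ u, B α u ∂Ψ := integral_const_mul M _
    exact (div_le_iff₀ hBpos).mpr hIA_le
  have hdint : ∀ f : U → ℝ, Measurable f → Integrable f (Measure.dirac us) := by
    intro f hf
    refine ⟨hf.aestronglyMeasurable, ?_⟩
    simp [HasFiniteIntegral, lintegral_dirac]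
  have hmem1 : M ∈ {x : ℝ | ∃ α ∈ S, ∃ Ψ : Measure U, IsProbabilityMeasure Ψ ∧
        Integrable (A α) Ψ ∧ Integrable (B α) Ψ ∧
        x = (∫ u, A α u ∂Ψ) / (∫ u, B α u ∂Ψ)} := by
    refine ⟨αs, hαs, Measure.dirac us, Measure.dirac.isProbabilityMeasure, ?_, ?_, ?_⟩
    · exact hdint _ (hAmeas αs hαs)
    · exact hdint _ (hBmeas αs hαs)
    · rw [integral_dirac, integral_dirac]
  have h1 : sSup {x : ℝ | ∃ α ∈ S, ∃ Ψ : Measure U, IsProbabilityMeasure Ψ ∧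
        Integrable (A α) Ψ ∧ Integrable (B α) Ψ ∧
        x = (∫ u, A α u ∂Ψ) / (∫ u, B α u ∂Ψ)} = M :=
    le_antisymm (csSup_le ⟨M, hmem1⟩ hbound) (le_csSup ⟨M, hbound⟩ hmem1)
  have hbound2 : ∀ x ∈ {x : ℝ | ∃ α ∈ S, ∃ u : U,
        x = (∫ v, A α v ∂(Measure.dirac u)) / (∫ v, B α v ∂(Measure.dirac u))}, x ≤ M := by
    rintro x ⟨α, hα, u, rfl⟩
    rw [integral_dirac, integral_dirac]
    exact hmax α hα u
  have hmem2 : M ∈ {x : ℝ | ∃ α ∈ S, ∃ u : U,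
        x = (∫ v, A α v ∂(Measure.dirac u)) / (∫ v, B α v ∂(Measure.dirac u))} := by
    exact ⟨αs, hαs, us, by rw [integral_dirac, integral_dirac]⟩
  have h2 : sSup {x : ℝ | ∃ α ∈ S, ∃ u : U,
        x = (∫ v, A α v ∂(Measure.dirac u)) / (∫ v, B α v ∂(Measure.dirac u))} = M :=
    le_antisymm (csSup_le ⟨M, hmem2⟩ hbound2) (le_csSup ⟨M, hbound2⟩ hmem2)
  have hbound3 : ∀ x ∈ {x : ℝ | ∃ α ∈ S, ∃ u : U, x = A α u / B α u}, x ≤ M := by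
    rintro x ⟨α, hα, u, rfl⟩; exact hmax α hα u
  have hmem3 : M ∈ {x : ℝ | ∃ α ∈ S, ∃ u : U, x = A α u / B α u} := ⟨αs, hαs, us, rfl⟩
  exact ⟨h1, h2, le_antisymm (csSup_le ⟨M, hmem3⟩ hbound3) (le_csSup ⟨M, hbound3⟩ hmem3)⟩
end

section
/- Let (U, 𝓑) be a measurable space in which all singletons are measurable, S ⊆ ℝ^r, and A, B : S × U → ℝ measurable in the second argument with B(α,u) > 0 for all (α,u) ∈ S × U. Suppose the test function C(α,u) = A(α,u)/B(α,u) is bounded above on S × U but does not attain its global maximum there. Then the linear-fractional integral functional is also bounded above, and sup over all α ∈ S and all probability measures Ψ on (U, 𝓑) (for which A(α,·), B(α,·) are Ψ-integrable) of I_α(Ψ) = sup over all α ∈ S and all points u ∈ U of I_α(δ_u) = sup_{(α,u) ∈ S × U} A(α,u)/B(α,u) < ∞. -/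
open MeasureTheory

/-- Lemma 2, relation (29): if the test function C(α,u) = A(α,u)/B(α,u) is bounded above
on S × U but does not attain its global maximum there, then the linear-fractional integral
functional is also bounded above, and
sup over (α,Ψ) of I_α(Ψ) = sup over (α,u) of I_α(δ_u) = sup over (α,u) of C(α,u) < ∞. -/
theorem stmt_8 {r : ℕ} {U : Type*} [MeasurableSpace U]
    (hsing : ∀ u : U, MeasurableSet ({u} : Set U))
    (S : Set (Fin r → ℝ)) (A B : (Fin r → ℝ) → U → ℝ)
    (hAmeas : ∀ α ∈ S, Measurable (A α)) (hBmeas : ∀ α ∈ S, Measurable (B α))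
    (hB : ∀ α ∈ S, ∀ u : U, 0 < B α u)
    (hbdd : BddAbove {x : ℝ | ∃ α ∈ S, ∃ u : U, x = A α u / B α u})
    (hnotattained : ¬ ∃ αs ∈ S, ∃ us : U,
        ∀ α ∈ S, ∀ u : U, A α u / B α u ≤ A αs us / B αs us) :
    BddAbove {x : ℝ | ∃ α ∈ S, ∃ Ψ : Measure U, IsProbabilityMeasure Ψ ∧
        Integrable (A α) Ψ ∧ Integrable (B α) Ψ ∧
        x = (∫ u, A α u ∂Ψ) / (∫ u, B α u ∂Ψ)} ∧
    sSup {x : ℝ | ∃ α ∈ S, ∃ Ψ : Measure U, IsProbabilityMeasure Ψ ∧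
        Integrable (A α) Ψ ∧ Integrable (B α) Ψ ∧
        x = (∫ u, A α u ∂Ψ) / (∫ u, B α u ∂Ψ)}
      = sSup {x : ℝ | ∃ α ∈ S, ∃ u : U, x = A α u / B α u} ∧
    sSup {x : ℝ | ∃ α ∈ S, ∃ u : U,
        x = (∫ v, A α v ∂(Measure.dirac u)) / (∫ v, B α v ∂(Measure.dirac u))}
      = sSup {x : ℝ | ∃ α ∈ S, ∃ u : U, x = A α u / B α u} := by
  haveI : MeasurableSingletonClass U := ⟨hsing⟩
  clear hnotattained
  set D : Set ℝ := {x : ℝ | ∃ α ∈ S, ∃ u : U, x = A α u / B α u} with hD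
  set P : Set ℝ := {x : ℝ | ∃ α ∈ S, ∃ Ψ : Measure U, IsProbabilityMeasure Ψ ∧
      Integrable (A α) Ψ ∧ Integrable (B α) Ψ ∧
      x = (∫ u, A α u ∂Ψ) / (∫ u, B α u ∂Ψ)} with hP
  set M := sSup D with hM
  -- every element of P is ≤ M
  have hub : ∀ x ∈ P, x ≤ M := by
    rintro x ⟨α, hα, Ψ, hΨ, hIA, hIB, rfl⟩
    have hCle : ∀ u : U, A α u ≤ M * B α u := by
      intro u
      have h1 : A α u / B α u ≤ M := le_csSup hbdd ⟨α, hα, u, rfl⟩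
      have := (div_le_iff₀ (hB α hα u)).mp h1
      linarith
    have hIBpos : 0 < ∫ u, B α u ∂Ψ := by
      have hnn : 0 ≤ B α := fun u => (hB α hα u).le
      rw [integral_pos_iff_support_of_nonneg hnn hIB]
      have hsupp : Function.support (B α) = Set.univ := by
        ext u; simp [Function.support, (hB α hα u).ne']
      rw [hsupp]
      simp [hΨ.measure_univ]
    rw [div_le_iff₀ hIBpos]
    calc (∫ u, A α u ∂Ψ) ≤ ∫ u, M * B α u ∂Ψ :=
          integral_mono hIA (hIB.const_mul M) hCle
      _ = M * ∫ u, B α u ∂Ψ := integral_const_mul M _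
  have hPbdd : BddAbove P := ⟨M, hub⟩
  -- D ⊆ P via Dirac measures
  have hDP : D ⊆ P := by
    rintro x ⟨α, hα, u, rfl⟩
    refine ⟨α, hα, Measure.dirac u, Measure.dirac.isProbabilityMeasure, ?_, ?_, ?_⟩
    · exact (integrable_const (A α u)).congr (ae_eq_dirac (A α)).symm
    · exact (integrable_const (B α u)).congr (ae_eq_dirac (B α)).symm
    · rw [integral_dirac (A α) u, integral_dirac (B α) u]
  refine ⟨hPbdd, ?_, ?_⟩
  · rcases P.eq_empty_or_nonempty with hPe | hPne
    · have hDe : D = ∅ := Set.eq_empty_of_subset_empty (hPe ▸ hDP)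
      rw [hPe, hM, hDe]
    · have hDne : D.Nonempty := by
        obtain ⟨x, α, hα, Ψ, hΨ, _, _, _⟩ := hPne
        have hU : Nonempty U := by
          by_contra h
          rw [not_nonempty_iff] at h
          have := hΨ.measure_univ
          rw [Set.univ_eq_empty_iff.mpr h] at this
          simp at this
        obtain ⟨u⟩ := hU
        exact ⟨A α u / B α u, α, hα, u, rfl⟩
      exact le_antisymm (csSup_le hPne hub) (csSup_le_csSup hPbdd hDne hDP)
  · congr 1
    ext x
    constructor
    · rintro ⟨α, hα, u, rfl⟩
      exact ⟨α, hα, u, by rw [integral_dirac (A α) u, integral_dirac (B α) u]⟩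
    · rintro ⟨α, hα, u, rfl⟩
      exact ⟨α, hα, u, by rw [integral_dirac (A α) u, integral_dirac (B α) u]⟩
end

section
/- Let (U, 𝓑) be a measurable space in which all singletons are measurable, S ⊆ ℝ^r, and A, B : S × U → ℝ measurable in the second argument with B(α,u) > 0 for all (α,u) ∈ S × U. Suppose the test function C(α,u) = A(α,u)/B(α,u) is bounded below on S × U but does not attain its global minimum there. Then the linear-fractional integral functional is also bounded below, and inf over all α ∈ S and all probability measures Ψ on (U, 𝓑) (for which A(α,·), B(α,·) are Ψ-integrable) of I_α(Ψ) = inf over all α ∈ S and all points u ∈ U of I_α(δ_u) = inf_{(α,u) ∈ S × U} A(α,u)/B(α,u) > −∞. -/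
open MeasureTheory

/-- Lemma 2, relation (30): if the test function C(α,u) = A(α,u)/B(α,u) is bounded below
on S × U but does not attain its global minimum there, then the linear-fractional integral
functional is also bounded below, and
inf over (α,Ψ) of I_α(Ψ) = inf over (α,u) of I_α(δ_u) = inf over (α,u) of C(α,u) > -∞. -/
theorem stmt_9 {r : ℕ} {U : Type*} [MeasurableSpace U]
    (hsing : ∀ u : U, MeasurableSet ({u} : Set U))
    (S : Set (Fin r → ℝ)) (A B : (Fin r → ℝ) → U → ℝ)
    (hAmeas : ∀ α ∈ S, Measurable (A α)) (hBmeas : ∀ α ∈ S, Measurable (B α))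
    (hB : ∀ α ∈ S, ∀ u : U, 0 < B α u)
    (hbdd : BddBelow {x : ℝ | ∃ α ∈ S, ∃ u : U, x = A α u / B α u})
    (hnotattained : ¬ ∃ αs ∈ S, ∃ us : U,
        ∀ α ∈ S, ∀ u : U, A αs us / B αs us ≤ A α u / B α u) :
    BddBelow {x : ℝ | ∃ α ∈ S, ∃ Ψ : Measure U, IsProbabilityMeasure Ψ ∧
        Integrable (A α) Ψ ∧ Integrable (B α) Ψ ∧
        x = (∫ u, A α u ∂Ψ) / (∫ u, B α u ∂Ψ)} ∧
    sInf {x : ℝ | ∃ α ∈ S, ∃ Ψ : Measure U, IsProbabilityMeasure Ψ ∧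
        Integrable (A α) Ψ ∧ Integrable (B α) Ψ ∧
        x = (∫ u, A α u ∂Ψ) / (∫ u, B α u ∂Ψ)}
      = sInf {x : ℝ | ∃ α ∈ S, ∃ u : U, x = A α u / B α u} ∧
    sInf {x : ℝ | ∃ α ∈ S, ∃ u : U,
        x = (∫ v, A α v ∂(Measure.dirac u)) / (∫ v, B α v ∂(Measure.dirac u))}
      = sInf {x : ℝ | ∃ α ∈ S, ∃ u : U, x = A α u / B α u} := by
  haveI : MeasurableSingletonClass U := ⟨hsing⟩
  set Cset := {x : ℝ | ∃ α ∈ S, ∃ u : U, x = A α u / B α u} with hCsetdef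
  set Pset := {x : ℝ | ∃ α ∈ S, ∃ Ψ : Measure U, IsProbabilityMeasure Ψ ∧
        Integrable (A α) Ψ ∧ Integrable (B α) Ψ ∧
        x = (∫ u, A α u ∂Ψ) / (∫ u, B α u ∂Ψ)} with hPsetdef
  -- Dirac set equals Cset
  have hdset : {x : ℝ | ∃ α ∈ S, ∃ u : U,
      x = (∫ v, A α v ∂(Measure.dirac u)) / (∫ v, B α v ∂(Measure.dirac u))} = Cset := by
    ext x
    constructor
    · rintro ⟨α, hα, u, rfl⟩
      exact ⟨α, hα, u, by rw [integral_dirac, integral_dirac]⟩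
    · rintro ⟨α, hα, u, rfl⟩
      exact ⟨α, hα, u, by rw [integral_dirac, integral_dirac]⟩
  -- every element of Pset is ≥ any lower bound of Cset
  have hlb : ∀ m ∈ lowerBounds Cset, ∀ x ∈ Pset, m ≤ x := by
    rintro m hm x ⟨α, hα, Ψ, hΨ, hIA, hIB, rfl⟩
    have hBpos : 0 < ∫ u, B α u ∂Ψ := by
      rw [integral_pos_iff_support_of_nonneg (fun u => (hB α hα u).le) hIB]
      have : Function.support (B α) = Set.univ := by
        ext u; simp [Function.support, (hB α hα u).ne']
      rw [this]
      simp [hΨ.measure_univ]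
    rw [le_div_iff₀ hBpos]
    have hptwise : ∀ u, m * B α u ≤ A α u := by
      intro u
      have h1 : m ≤ A α u / B α u := hm ⟨α, hα, u, rfl⟩
      calc m * B α u ≤ (A α u / B α u) * B α u :=
            mul_le_mul_of_nonneg_right h1 (hB α hα u).le
        _ = A α u := div_mul_cancel₀ _ (hB α hα u).ne'
    calc m * ∫ u, B α u ∂Ψ = ∫ u, m * B α u ∂Ψ := (integral_const_mul m _).symm
      _ ≤ ∫ u, A α u ∂Ψ := integral_mono (hIB.const_mul m) hIA hptwise
  -- Cset ⊆ Pset via dirac measures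
  have hsub : Cset ⊆ Pset := by
    rintro x ⟨α, hα, u, rfl⟩
    have hintA : Integrable (A α) (Measure.dirac u) :=
      ⟨(hAmeas α hα).aestronglyMeasurable, by
        simp [HasFiniteIntegral, lintegral_dirac]⟩
    have hintB : Integrable (B α) (Measure.dirac u) :=
      ⟨(hBmeas α hα).aestronglyMeasurable, by
        simp [HasFiniteIntegral, lintegral_dirac]⟩
    exact ⟨α, hα, Measure.dirac u, Measure.dirac.isProbabilityMeasure, hintA, hintB,
      by rw [integral_dirac, integral_dirac]⟩
  have hPbdd : BddBelow Pset := by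
    obtain ⟨m, hm⟩ := hbdd
    exact ⟨m, fun x hx => hlb m hm x hx⟩
  refine ⟨hPbdd, ?_, by rw [hdset]⟩
  rcases Set.eq_empty_or_nonempty Cset with hC | hC
  · have hP : Pset = ∅ := by
      rcases Set.eq_empty_or_nonempty Pset with h | ⟨x, α, hα, Ψ, hΨ, hIA, hIB, rfl⟩
      · exact h
      · haveI : Nonempty U := by
          by_contra h
          rw [not_nonempty_iff] at h
          have := hΨ.measure_univ
          simp [Set.univ_eq_empty_iff.2 h] at this
        obtain ⟨u⟩ := ‹Nonempty U›
        exact absurd (show (A α u / B α u) ∈ Cset from ⟨α, hα, u, rfl⟩) (by simp [hC])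
    rw [hC, hP]
  · apply le_antisymm
    · exact csInf_le_csInf hPbdd hC hsub
    · apply le_csInf (hC.mono hsub)
      intro x hx
      exact hlb _ (fun y hy => csInf_le hbdd hy) x hx
end

section
/- Let (U, 𝓑) be a measurable space in which all singletons are measurable, S ⊆ ℝ^r nonempty, U nonempty, and A, B : S × U → ℝ measurable in the second argument with B(α,u) > 0 for all (α,u) ∈ S × U. Suppose the test function C(α,u) = A(α,u)/B(α,u) is bounded above on S × U but does not attain its global maximum there. Then for every ε > 0 there exist α⁺(ε) ∈ S and u⁺(ε) ∈ U such that, with δ_{u⁺(ε)} the degenerate probability measure concentrated at u⁺(ε) and M = sup over all α ∈ S and admissible probability measures Ψ of I_α(Ψ), one has M − ε < I_{α⁺(ε)}(δ_{u⁺(ε)}) = A(α⁺(ε), u⁺(ε))/B(α⁺(ε), u⁺(ε)) < M. -/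
open MeasureTheory

lemma integrable_dirac_aux {U : Type*} [MeasurableSpace U] [MeasurableSingletonClass U]
    {f : U → ℝ} (hf : Measurable f) (a : U) : Integrable f (Measure.dirac a) := by
  refine ⟨hf.aestronglyMeasurable, ?_⟩
  rw [HasFiniteIntegral, lintegral_dirac]
  exact ENNReal.coe_lt_top

/-- Theorem 2, assertion 1 (relation (27)): if the test function C(α,u) = A(α,u)/B(α,u)
is bounded above on S × U but does not attain its global maximum there, then for every
ε > 0 there is a pair (α⁺(ε), u⁺(ε)) ∈ S × U such that, with
M = sup over (α,Ψ) of I_α(Ψ), one has M - ε < I_{α⁺(ε)}(δ_{u⁺(ε)}) = C(α⁺(ε),u⁺(ε)) < M. -/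
theorem stmt_10 {r : ℕ} {U : Type*} [MeasurableSpace U] [Nonempty U]
    (hsing : ∀ u : U, MeasurableSet ({u} : Set U))
    (S : Set (Fin r → ℝ)) (hS : S.Nonempty) (A B : (Fin r → ℝ) → U → ℝ)
    (hAmeas : ∀ α ∈ S, Measurable (A α)) (hBmeas : ∀ α ∈ S, Measurable (B α))
    (hB : ∀ α ∈ S, ∀ u : U, 0 < B α u)
    (hbdd : BddAbove {x : ℝ | ∃ α ∈ S, ∃ u : U, x = A α u / B α u})
    (hnotattained : ¬ ∃ αs ∈ S, ∃ us : U,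
        ∀ α ∈ S, ∀ u : U, A α u / B α u ≤ A αs us / B αs us) :
    ∀ ε > (0 : ℝ), ∃ αp ∈ S, ∃ up : U,
      (sSup {x : ℝ | ∃ α ∈ S, ∃ Ψ : Measure U, IsProbabilityMeasure Ψ ∧
          Integrable (A α) Ψ ∧ Integrable (B α) Ψ ∧
          x = (∫ u, A α u ∂Ψ) / (∫ u, B α u ∂Ψ)}) - ε
        < (∫ v, A αp v ∂(Measure.dirac up)) / (∫ v, B αp v ∂(Measure.dirac up)) ∧
      (∫ v, A αp v ∂(Measure.dirac up)) / (∫ v, B αp v ∂(Measure.dirac up))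
        = A αp up / B αp up ∧
      A αp up / B αp up
        < sSup {x : ℝ | ∃ α ∈ S, ∃ Ψ : Measure U, IsProbabilityMeasure Ψ ∧
            Integrable (A α) Ψ ∧ Integrable (B α) Ψ ∧
            x = (∫ u, A α u ∂Ψ) / (∫ u, B α u ∂Ψ)} := by
  haveI : MeasurableSingletonClass U := ⟨hsing⟩
  set T : Set ℝ := {x : ℝ | ∃ α ∈ S, ∃ u : U, x = A α u / B α u} with hT
  set W : Set ℝ := {x : ℝ | ∃ α ∈ S, ∃ Ψ : Measure U, IsProbabilityMeasure Ψ ∧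
      Integrable (A α) Ψ ∧ Integrable (B α) Ψ ∧
      x = (∫ u, A α u ∂Ψ) / (∫ u, B α u ∂Ψ)} with hW
  obtain ⟨α₀, hα₀⟩ := hS
  obtain ⟨u₀⟩ := ‹Nonempty U›
  have hTne : T.Nonempty := ⟨A α₀ u₀ / B α₀ u₀, α₀, hα₀, u₀, rfl⟩
  -- every element of W is at most sSup T
  have key : ∀ x ∈ W, x ≤ sSup T := by
    rintro x ⟨α, hα, Ψ, hΨ, hAint, hBint, rfl⟩
    have hBpos : 0 < ∫ u, B α u ∂Ψ := by
      rw [integral_pos_iff_support_of_nonneg (fun u => (hB α hα u).le) hBint]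
      have : Function.support (B α) = Set.univ := by
        ext u; simp [Function.support, (hB α hα u).ne']
      rw [this]
      simp [hΨ.measure_univ]
    have hAle : ∀ u, A α u ≤ sSup T * B α u := by
      intro u
      have h1 : A α u / B α u ≤ sSup T := le_csSup hbdd ⟨α, hα, u, rfl⟩
      have h2 : A α u = (A α u / B α u) * B α u := by
        rw [div_mul_cancel₀ _ (hB α hα u).ne']
      rw [h2]
      exact mul_le_mul_of_nonneg_right h1 (hB α hα u).le
    have hint : ∫ u, A α u ∂Ψ ≤ sSup T * ∫ u, B α u ∂Ψ := by
      rw [← integral_const_mul]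
      exact integral_mono hAint (hBint.const_mul _) hAle
    rw [div_le_iff₀ hBpos]
    exact hint
  -- dirac values lie in W
  have hdiracW : ∀ α ∈ S, ∀ u : U, A α u / B α u ∈ W := by
    intro α hα u
    refine ⟨α, hα, Measure.dirac u, inferInstance, integrable_dirac_aux (hAmeas α hα) u,
      integrable_dirac_aux (hBmeas α hα) u, ?_⟩
    rw [integral_dirac, integral_dirac]
  have hWne : W.Nonempty := ⟨_, hdiracW α₀ hα₀ u₀⟩
  have hWbdd : BddAbove W := ⟨sSup T, key⟩
  have hEq : sSup W = sSup T := by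
    apply le_antisymm (csSup_le hWne key)
    apply csSup_le hTne
    rintro x ⟨α, hα, u, rfl⟩
    exact le_csSup hWbdd (hdiracW α hα u)
  -- strict: every C value is < sSup T
  have hstrict : ∀ α ∈ S, ∀ u : U, A α u / B α u < sSup T := by
    intro α hα u
    rcases lt_or_eq_of_le (le_csSup hbdd ⟨α, hα, u, rfl⟩) with h | h
    · exact h
    · exfalso
      exact hnotattained ⟨α, hα, u, fun β hβ v => by
        rw [h]; exact le_csSup hbdd ⟨β, hβ, v, rfl⟩⟩
  intro ε hε
  obtain ⟨x, hxT, hxgt⟩ := exists_lt_of_lt_csSup hTne (sub_lt_self (sSup T) hε)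
  obtain ⟨α, hα, u, rfl⟩ := hxT
  refine ⟨α, hα, u, ?_, ?_, ?_⟩
  · rw [hEq, integral_dirac, integral_dirac]; exact hxgt
  · rw [integral_dirac, integral_dirac]
  · rw [hEq]; exact hstrict α hα u
end

section
/- Let (U, 𝓑) be a measurable space in which all singletons are measurable, S ⊆ ℝ^r nonempty, U nonempty, and A, B : S × U → ℝ measurable in the second argument with B(α,u) > 0 for all (α,u) ∈ S × U. Suppose the test function C(α,u) = A(α,u)/B(α,u) is bounded below on S × U but does not attain its global minimum there. Then for every ε > 0 there exist α⁻(ε) ∈ S and u⁻(ε) ∈ U such that, with δ_{u⁻(ε)} the degenerate probability measure concentrated at u⁻(ε) and m = inf over all α ∈ S and admissible probability measures Ψ of I_α(Ψ), one has m < I_{α⁻(ε)}(δ_{u⁻(ε)}) = A(α⁻(ε), u⁻(ε))/B(α⁻(ε), u⁻(ε)) < m + ε. -/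
open MeasureTheory

/-- Theorem 2, assertion 2 (relation (28)): if the test function C(α,u) = A(α,u)/B(α,u)
is bounded below on S × U but does not attain its global minimum there, then for every
ε > 0 there is a pair (α⁻(ε), u⁻(ε)) ∈ S × U such that, with
m = inf over (α,Ψ) of I_α(Ψ), one has m < I_{α⁻(ε)}(δ_{u⁻(ε)}) = C(α⁻(ε),u⁻(ε)) < m + ε. -/
theorem stmt_11 {r : ℕ} {U : Type*} [MeasurableSpace U] [Nonempty U]
    (hsing : ∀ u : U, MeasurableSet ({u} : Set U))
    (S : Set (Fin r → ℝ)) (hS : S.Nonempty) (A B : (Fin r → ℝ) → U → ℝ)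
    (hAmeas : ∀ α ∈ S, Measurable (A α)) (hBmeas : ∀ α ∈ S, Measurable (B α))
    (hB : ∀ α ∈ S, ∀ u : U, 0 < B α u)
    (hbdd : BddBelow {x : ℝ | ∃ α ∈ S, ∃ u : U, x = A α u / B α u})
    (hnotattained : ¬ ∃ αs ∈ S, ∃ us : U,
        ∀ α ∈ S, ∀ u : U, A αs us / B αs us ≤ A α u / B α u) :
    ∀ ε > (0 : ℝ), ∃ αm ∈ S, ∃ um : U,
      sInf {x : ℝ | ∃ α ∈ S, ∃ Ψ : Measure U, IsProbabilityMeasure Ψ ∧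
          Integrable (A α) Ψ ∧ Integrable (B α) Ψ ∧
          x = (∫ u, A α u ∂Ψ) / (∫ u, B α u ∂Ψ)}
        < (∫ v, A αm v ∂(Measure.dirac um)) / (∫ v, B αm v ∂(Measure.dirac um)) ∧
      (∫ v, A αm v ∂(Measure.dirac um)) / (∫ v, B αm v ∂(Measure.dirac um))
        = A αm um / B αm um ∧
      A αm um / B αm um
        < (sInf {x : ℝ | ∃ α ∈ S, ∃ Ψ : Measure U, IsProbabilityMeasure Ψ ∧
            Integrable (A α) Ψ ∧ Integrable (B α) Ψ ∧
            x = (∫ u, A α u ∂Ψ) / (∫ u, B α u ∂Ψ)}) + ε := by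
  haveI : MeasurableSingletonClass U := ⟨hsing⟩
  intro ε hε
  set TC : Set ℝ := {x : ℝ | ∃ α ∈ S, ∃ u : U, x = A α u / B α u} with hTC
  set TP : Set ℝ := {x : ℝ | ∃ α ∈ S, ∃ Ψ : Measure U, IsProbabilityMeasure Ψ ∧
      Integrable (A α) Ψ ∧ Integrable (B α) Ψ ∧
      x = (∫ u, A α u ∂Ψ) / (∫ u, B α u ∂Ψ)} with hTP
  obtain ⟨α0, hα0⟩ := hS
  obtain ⟨u0⟩ := ‹Nonempty U›
  have hTCne : TC.Nonempty := ⟨_, α0, hα0, u0, rfl⟩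
  -- TC ⊆ TP via dirac measures
  have hsub : TC ⊆ TP := by
    rintro x ⟨α, hα, u, rfl⟩
    refine ⟨α, hα, Measure.dirac u, inferInstance, ?_, ?_, ?_⟩
    · exact ⟨(hAmeas α hα).aestronglyMeasurable,
        by simp [HasFiniteIntegral, lintegral_dirac]⟩
    · exact ⟨(hBmeas α hα).aestronglyMeasurable,
        by simp [HasFiniteIntegral, lintegral_dirac]⟩
    · rw [integral_dirac, integral_dirac]
  have hTPne : TP.Nonempty := hTCne.mono hsub
  -- sInf TC is a lower bound for TP
  have hlb : ∀ x ∈ TP, sInf TC ≤ x := by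
    rintro x ⟨α, hα, Ψ, hΨ, hIA, hIB, rfl⟩
    have hBpos : 0 < ∫ u, B α u ∂Ψ := by
      rw [integral_pos_iff_support_of_nonneg (fun u => (hB α hα u).le) hIB]
      have : Function.support (B α) = Set.univ := by
        ext u; simp [Function.support, (hB α hα u).ne']
      rw [this]
      simp [hΨ.measure_univ]
    have hpt : ∀ u, sInf TC * B α u ≤ A α u := by
      intro u
      have h1 : sInf TC ≤ A α u / B α u := csInf_le hbdd ⟨α, hα, u, rfl⟩
      calc sInf TC * B α u ≤ (A α u / B α u) * B α u :=
            mul_le_mul_of_nonneg_right h1 (hB α hα u).le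
        _ = A α u := div_mul_cancel₀ _ (hB α hα u).ne'
    have hint : sInf TC * ∫ u, B α u ∂Ψ ≤ ∫ u, A α u ∂Ψ := by
      rw [← integral_const_mul]
      exact integral_mono (hIB.const_mul _) hIA hpt
    exact (le_div_iff₀ hBpos).mpr hint
  have hTPbdd : BddBelow TP := ⟨sInf TC, hlb⟩
  -- sInf TP = sInf TC
  have heq : sInf TP = sInf TC :=
    le_antisymm (csInf_le_csInf hTPbdd hTCne hsub) (le_csInf hTPne hlb)
  -- pick ε-approximate element of TC
  obtain ⟨y, hyTC, hy⟩ : ∃ y ∈ TC, y < sInf TC + ε :=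
    exists_lt_of_csInf_lt hTCne (lt_add_of_pos_right _ hε)
  obtain ⟨αm, hαm, um, rfl⟩ := hyTC
  have hstrict : sInf TC < A αm um / B αm um := by
    rcases lt_or_eq_of_le (csInf_le hbdd ⟨αm, hαm, um, rfl⟩) with h | h
    · exact h
    · exfalso
      exact hnotattained ⟨αm, hαm, um, fun α hα u => h ▸ csInf_le hbdd ⟨α, hα, u, rfl⟩⟩
  refine ⟨αm, hαm, um, ?_, ?_, ?_⟩
  · rw [heq, integral_dirac, integral_dirac]; exact hstrict
  · rw [integral_dirac, integral_dirac]
  · rw [heq]; exact hy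
end
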